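/- If C is the canonical colimit in iE of an ω-sequence (Cᵢ, φᵢ) of finite biextensional Chu structures (each Aᵢ and Xᵢ finite), then C is biextensional; hence colimits of ω-sequences of finite Chu structures exist in the category iB of biextensional Chu spaces with monic morphisms. -/

import Mathlib

universe u

/-- A Chu space over `S`: objects `A`, attributes `X`, satisfaction `r`. -/
structure ChuSpace (S : Type u) : Type (u+1) where
  A : Type u
  X : Type u
  r : A → X → S

/-- A Chu morphism `(f, g)`. -/
@[ext]
structure ChuHom {S : Type u} (C D : ChuSpace S) : Type u where
  f : C.A → D.A
  g : D.X → C.X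
  comm : ∀ a y, D.r (f a) y = C.r a (g y)

variable {S : Type u}

/-- Composition of Chu morphisms: `ψ.comp φ = ψ ∘ φ`. -/
def ChuHom.comp {C D E : ChuSpace S} (ψ : ChuHom D E) (φ : ChuHom C D) : ChuHom C E where
  f := ψ.f ∘ φ.f
  g := φ.g ∘ ψ.g
  comm := fun a y => by
    simp only [Function.comp_apply]
    rw [ψ.comm, φ.comm]

def ChuHom.idHom (C : ChuSpace S) : ChuHom C C := ⟨id, id, fun _ _ => rfl⟩

/-- `φ` is an isomorphism of Chu spaces. -/
def ChuIso {C D : ChuSpace S} (φ : ChuHom C D) : Prop :=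
  ∃ ψ : ChuHom D C, φ.comp ψ = ChuHom.idHom D ∧ ψ.comp φ = ChuHom.idHom C

/-- No repeated columns. -/
def ChuExtensional (C : ChuSpace S) : Prop :=
  ∀ x y : C.X, (∀ a, C.r a x = C.r a y) → x = y

/-- No repeated rows. -/
def ChuSeparable (C : ChuSpace S) : Prop :=
  ∀ a b : C.A, (∀ x, C.r a x = C.r b x) → a = b

def ChuBiextensional (C : ChuSpace S) : Prop := ChuExtensional C ∧ ChuSeparable C

/-- Discrete: every function `A → S` is realized by a column. -/
def ChuDiscrete (C : ChuSpace S) : Prop :=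
  ∀ f : C.A → S, ∃ x : C.X, ∀ a, C.r a x = f a

/-- `φ` is monic in the full subcategory of Chu spaces satisfying `Obj`. -/
def MonicIn (Obj : ChuSpace S → Prop) {C D : ChuSpace S} (φ : ChuHom C D) : Prop :=
  ∀ (E : ChuSpace S), Obj E → ∀ ψ₁ ψ₂ : ChuHom E C,
    φ.comp ψ₁ = φ.comp ψ₂ → ψ₁ = ψ₂

/-- Monics of the category `C` of Chu spaces: injective forward, surjective backward. -/
def IsMonoC {C D : ChuSpace S} (φ : ChuHom C D) : Prop :=
  Function.Injective φ.f ∧ Function.Surjective φ.g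

/-- Monics of the categories `E` and `B`: injective forward component. -/
def IsMonoE {C D : ChuSpace S} (φ : ChuHom C D) : Prop :=
  Function.Injective φ.f

/-- An ω-sequence of Chu spaces. -/
structure ChuSeq (S : Type u) : Type (u+1) where
  C : ℕ → ChuSpace S
  φ : ∀ i, ChuHom (C i) (C (i+1))

/-- A cocone from the ω-sequence `T` to `C`. -/
structure Cocone (T : ChuSeq S) (C : ChuSpace S) : Type u where
  ψ : ∀ i, ChuHom (T.C i) C
  compat : ∀ i, (ψ (i+1)).comp (T.φ i) = ψ i

/-- `c` is a colimit of `T` in the subcategory with objects `Obj` and morphisms `Mor`. -/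
structure IsColimit (Obj : ChuSpace S → Prop)
    (Mor : ∀ C D : ChuSpace S, ChuHom C D → Prop)
    (T : ChuSeq S) (C : ChuSpace S) (c : Cocone T C) : Prop where
  obj : Obj C
  mor : ∀ i, Mor _ _ (c.ψ i)
  univ : ∀ (C' : ChuSpace S), Obj C' → ∀ (c' : Cocone T C'), (∀ i, Mor _ _ (c'.ψ i)) →
      ∃! μ : ChuHom C C', Mor _ _ μ ∧ ∀ i, μ.comp (c.ψ i) = c'.ψ i

/-- A finite object in the subcategory `(Obj, Mor)`: every morphism into a colimit of an
ω-sequence factors through some stage. -/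
def FiniteObjIn (Obj : ChuSpace S → Prop) (Mor : ∀ C D : ChuSpace S, ChuHom C D → Prop)
    (F : ChuSpace S) : Prop :=
  Obj F ∧ ∀ (T : ChuSeq S), (∀ i, Obj (T.C i)) → (∀ i, Mor _ _ (T.φ i)) →
    ∀ (C : ChuSpace S) (c : Cocone T C), IsColimit Obj Mor T C c →
      ∀ φ : ChuHom F C, Mor _ _ φ →
        ∃ (i : ℕ) (ψ : ChuHom F (T.C i)), Mor _ _ ψ ∧ (c.ψ i).comp ψ = φ

/-- Strongly finite: a finite object of `iC` with finite object set,
finite and non-empty attribute set. -/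
def StronglyFinite (F : ChuSpace S) : Prop :=
  FiniteObjIn (fun _ => True) (fun _ _ φ => IsMonoC φ) F ∧
    Finite F.A ∧ Finite F.X ∧ Nonempty F.X


section KonigAux

lemma chu_antitone_iInter_nonempty {τ : Type u} [Finite τ] (f : ℕ → Set τ)
    (hdec : ∀ m, f (m+1) ⊆ f m) (hne : ∀ m, (f m).Nonempty) :
    (⋂ m, f m).Nonempty := by
  have hanti : Antitone f := antitone_nat_of_succ_le hdec
  have hrange : (Set.range fun m => (f m).ncard).Nonempty := ⟨(f 0).ncard, ⟨0, rfl⟩⟩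
  obtain ⟨N, hN⟩ := Nat.sInf_mem hrange
  have hmin : ∀ m, sInf (Set.range fun m => (f m).ncard) ≤ (f m).ncard :=
    fun m => Nat.sInf_le ⟨m, rfl⟩
  have hstab : ∀ m, N ≤ m → f m = f N := by
    intro m hm
    exact Set.eq_of_subset_of_ncard_le (hanti hm) (hN.le.trans (hmin m)) (Set.toFinite _)
  obtain ⟨x, hx⟩ := hne N
  refine ⟨x, Set.mem_iInter.mpr fun m => ?_⟩
  rcases le_total N m with h | h
  · rw [hstab m h]; exact hx
  · exact hanti h hx

def chuReach {T : ℕ → Type u} (g : ∀ n, T (n+1) → T n) : ℕ → ∀ n, Set (T n)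
  | 0 => fun _ => Set.univ
  | m+1 => fun n => g n '' chuReach g m (n+1)

lemma chuReach_nonempty {T : ℕ → Type u} (g : ∀ n, T (n+1) → T n)
    (hne : ∀ n, Nonempty (T n)) : ∀ m n, (chuReach g m n).Nonempty := by
  intro m
  induction m with
  | zero => exact fun n => ⟨(hne n).some, trivial⟩
  | succ m ih => exact fun n => (ih (n+1)).image (g n)

lemma chuReach_succ_subset {T : ℕ → Type u} (g : ∀ n, T (n+1) → T n) :
    ∀ m n, chuReach g (m+1) n ⊆ chuReach g m n := by
  intro m
  induction m with
  | zero => exact fun n => Set.subset_univ _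
  | succ m ih => exact fun n => Set.image_mono (ih (n+1))

lemma chu_invlim_nonempty {T : ℕ → Type u} (hfin : ∀ n, Finite (T n))
    (hne : ∀ n, Nonempty (T n)) (g : ∀ n, T (n+1) → T n) :
    ∃ x : ∀ n, T n, ∀ n, g n (x (n+1)) = x n := by
  have := hfin
  let Good : ∀ n, Set (T n) := fun n => ⋂ m, chuReach g m n
  have good_ne : ∀ n, (Good n).Nonempty := fun n =>
    chu_antitone_iInter_nonempty (fun m => chuReach g m n)
      (fun m => chuReach_succ_subset g m n) (fun m => chuReach_nonempty g hne m n)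
  have good_step : ∀ n (x : T n), x ∈ Good n → ∃ z, z ∈ Good (n+1) ∧ g n z = x := by
    intro n x hx
    have hx' : ∀ m, x ∈ chuReach g m n := Set.mem_iInter.mp hx
    have h1 : ∀ m, ({z | z ∈ chuReach g m (n+1) ∧ g n z = x}).Nonempty := by
      intro m
      obtain ⟨z, hz, hzx⟩ := hx' (m+1)
      exact ⟨z, hz, hzx⟩
    have h2 : ∀ m, {z | z ∈ chuReach g (m+1) (n+1) ∧ g n z = x} ⊆
        {z | z ∈ chuReach g m (n+1) ∧ g n z = x} :=
      fun m z hz => ⟨chuReach_succ_subset g m (n+1) hz.1, hz.2⟩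
    obtain ⟨z, hz⟩ := chu_antitone_iInter_nonempty _ h2 h1
    have hz' := Set.mem_iInter.mp hz
    exact ⟨z, Set.mem_iInter.mpr fun m => (hz' m).1, (hz' 0).2⟩
  choose zf hzg hzeq using good_step
  let seq : ∀ n, {t : T n // t ∈ Good n} := fun n =>
    Nat.rec ⟨(good_ne 0).choose, (good_ne 0).choose_spec⟩
      (fun n p => ⟨zf n p.1 p.2, hzg n p.1 p.2⟩) n
  exact ⟨fun n => (seq n).1, fun n => hzeq n (seq n).1 (seq n).2⟩

end KonigAux

/-- For an ω-sequence of finite biextensional Chu structures (finite object and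
attribute sets), the canonical colimit is biextensional and is a colimit in `iB`:
colimits of ω-sequences of finite Chu structures exist in the category of
biextensional Chu spaces with monic morphisms. -/
theorem stmt13 {S α : Type u} (A : ℕ → Set α) (hA : ∀ i, A i ⊆ A (i+1))
    (X : ℕ → Type u) (r : ∀ i, ↥(A i) → X i → S) (g : ∀ i, X (i+1) → X i)
    (hc : ∀ (i : ℕ) (a : ↥(A i)) (x : X (i+1)),
      r (i+1) (Set.inclusion (hA i) a) x = r i a (g i x))
    (hAfin : ∀ i, Finite ↥(A i)) (hXfin : ∀ i, Finite (X i))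
    (hbi : ∀ i, ChuBiextensional (⟨↥(A i), X i, r i⟩ : ChuSpace S)) :
    ∃ r' : ↥(⋃ i, A i) → {x : ∀ i, X i // ∀ i, g i (x (i+1)) = x i} → S,
      (∀ (i : ℕ) (a : α) (ha : a ∈ A i)
          (x : {x : ∀ i, X i // ∀ i, g i (x (i+1)) = x i}),
        r' ⟨a, Set.mem_iUnion.mpr ⟨i, ha⟩⟩ x = r i ⟨a, ha⟩ (x.1 i)) ∧
      ChuBiextensional (⟨↥(⋃ i, A i), {x : ∀ i, X i // ∀ i, g i (x (i+1)) = x i}, r'⟩ :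
        ChuSpace S) ∧
      ∃ c : Cocone (⟨fun i => ⟨↥(A i), X i, r i⟩,
                     fun i => ⟨Set.inclusion (hA i), g i, hc i⟩⟩ : ChuSeq S)
          ⟨↥(⋃ i, A i), {x : ∀ i, X i // ∀ i, g i (x (i+1)) = x i}, r'⟩,
        IsColimit ChuBiextensional (fun _ _ φ => IsMonoE φ)
          (⟨fun i => ⟨↥(A i), X i, r i⟩,
            fun i => ⟨Set.inclusion (hA i), g i, hc i⟩⟩ : ChuSeq S)
          ⟨↥(⋃ i, A i), {x : ∀ i, X i // ∀ i, g i (x (i+1)) = x i}, r'⟩ c := by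
    classical
  have hmono : ∀ {i j : ℕ}, i ≤ j → A i ⊆ A j := by
    intro i j h
    induction j, h using Nat.le_induction with
    | base => exact subset_rfl
    | succ j hj ih => exact ih.trans (hA j)
  have memU : ∀ a : ↥(⋃ i, A i), ∃ i, a.1 ∈ A i := fun a => Set.mem_iUnion.mp a.2
  let idx : ↥(⋃ i, A i) → ℕ := fun a => Nat.find (memU a)
  have hidx : ∀ a, a.1 ∈ A (idx a) := fun a => Nat.find_spec (memU a)
  let L := {x : ∀ i, X i // ∀ i, g i (x (i+1)) = x i}
  have hcons : ∀ (x : L) (a : α) {i j : ℕ} (h : i ≤ j) (ha : a ∈ A i),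
      r j ⟨a, hmono h ha⟩ (x.1 j) = r i ⟨a, ha⟩ (x.1 i) := by
    intro x a i j h ha
    induction j, h using Nat.le_induction with
    | base => rfl
    | succ j hj ih =>
      have h1 := hc j ⟨a, hmono hj ha⟩ (x.1 (j+1))
      rw [x.2 j] at h1
      exact h1.trans ih
  let r' : ↥(⋃ i, A i) → L → S := fun a x => r (idx a) ⟨a.1, hidx a⟩ (x.1 (idx a))
  have hspec : ∀ (i : ℕ) (a : α) (ha : a ∈ A i) (x : L),
      r' ⟨a, Set.mem_iUnion.mpr ⟨i, ha⟩⟩ x = r i ⟨a, ha⟩ (x.1 i) := by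
    intro i a ha x
    rcases le_total (idx ⟨a, Set.mem_iUnion.mpr ⟨i, ha⟩⟩) i with h | h
    · exact (hcons x a h (hidx ⟨a, Set.mem_iUnion.mpr ⟨i, ha⟩⟩)).symm
    · exact hcons x a h ha
  have hext : ∀ x y : L, (∀ a : ↥(⋃ i, A i), r' a x = r' a y) → x = y := by
    intro x y h
    refine Subtype.ext (funext fun i => ?_)
    refine (hbi i).1 (x.1 i) (y.1 i) fun a => ?_
    have h1 := h ⟨a.1, Set.mem_iUnion.mpr ⟨i, a.2⟩⟩
    rw [hspec i a.1 a.2 x, hspec i a.1 a.2 y] at h1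
    exact h1
  have hsep : ∀ a b : ↥(⋃ i, A i), (∀ x : L, r' a x = r' b x) → a = b := by
    intro a b hab
    by_contra hne
    have hne' : a.1 ≠ b.1 := fun h => hne (Subtype.ext h)
    obtain ⟨i, hai⟩ := memU a
    obtain ⟨j, hbj⟩ := memU b
    have hak : a.1 ∈ A (max i j) := hmono (le_max_left i j) hai
    have hbk : b.1 ∈ A (max i j) := hmono (le_max_right i j) hbj
    set k := max i j with hk
    let T : ℕ → Type u := fun m =>
      {x : X m // ∀ hm : k ≤ m, r m ⟨a.1, hmono hm hak⟩ x ≠ r m ⟨b.1, hmono hm hbk⟩ x}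
    have hwit : ∀ m (hm : k ≤ m), ∃ x : X m,
        r m ⟨a.1, hmono hm hak⟩ x ≠ r m ⟨b.1, hmono hm hbk⟩ x := by
      intro m hm
      by_contra hno
      push_neg at hno
      have h5 := Subtype.ext_iff.mp
        ((hbi m).2 ⟨a.1, hmono hm hak⟩ ⟨b.1, hmono hm hbk⟩ hno)
      exact hne' h5
    have hXne : ∀ {m n : ℕ}, m ≤ n → Nonempty (X n) → Nonempty (X m) := by
      intro m n h
      induction n, h using Nat.le_induction with
      | base => exact id
      | succ n hn ih => exact fun hx => ih ⟨g n hx.some⟩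
    have hTfin : ∀ m, Finite (T m) := by
      intro m; have := hXfin m; exact Subtype.finite
    have hTne : ∀ m, Nonempty (T m) := by
      intro m
      rcases le_or_gt k m with hm | hm
      · obtain ⟨x, hx⟩ := hwit m hm
        exact ⟨⟨x, fun _ => hx⟩⟩
      · obtain ⟨x⟩ := hXne hm.le ⟨(hwit k le_rfl).choose⟩
        exact ⟨⟨x, fun hm' => absurd hm' (not_le.mpr hm)⟩⟩
    let gT : ∀ m, T (m+1) → T m := fun m x =>
      ⟨g m x.1, by
        intro hm heq
        have ha' := hc m ⟨a.1, hmono hm hak⟩ x.1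
        have hb' := hc m ⟨b.1, hmono hm hbk⟩ x.1
        exact x.2 (hm.trans (Nat.le_succ m)) (ha'.trans (heq.trans hb'.symm))⟩
    obtain ⟨t, ht⟩ := chu_invlim_nonempty hTfin hTne gT
    let xL : L := ⟨fun m => (t m).1, fun m => congrArg Subtype.val (ht m)⟩
    have h2 := hspec k a.1 hak xL
    have h3 := hspec k b.1 hbk xL
    have h4 : r k ⟨a.1, hak⟩ (xL.1 k) = r k ⟨b.1, hbk⟩ (xL.1 k) := by
      rw [← h2, ← h3]
      exact hab xL
    exact (t k).2 le_rfl h4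
  let Col : ChuSpace S := ⟨↥(⋃ i, A i), L, r'⟩
  let Tseq : ChuSeq S :=
    ⟨fun i => ⟨↥(A i), X i, r i⟩, fun i => ⟨Set.inclusion (hA i), g i, hc i⟩⟩
  let ψc : ∀ i, ChuHom (Tseq.C i) Col := fun i =>
    ⟨fun a => ⟨a.1, Set.mem_iUnion.mpr ⟨i, a.2⟩⟩, fun x => x.1 i,
      fun a y => hspec i a.1 a.2 y⟩
  have hcompat : ∀ i, (ψc (i+1)).comp (Tseq.φ i) = ψc i := by
    intro i
    refine ChuHom.ext ?_ ?_
    · funext a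
      exact Subtype.ext rfl
    · funext x
      exact x.2 i
  refine ⟨r', hspec, ⟨hext, hsep⟩, ⟨ψc, hcompat⟩, ?_, ?_, ?_⟩
  · exact ⟨hext, hsep⟩
  · intro i a b h
    have h5 := Subtype.ext_iff.mp h
    exact Subtype.ext h5
  · intro C' hC' c' hmor'
    have hcons' : ∀ (a : α) {i j : ℕ} (h : i ≤ j) (ha : a ∈ A i),
        (c'.ψ j).f ⟨a, hmono h ha⟩ = (c'.ψ i).f ⟨a, ha⟩ := by
      intro a i j h ha
      induction j, h using Nat.le_induction with
      | base => rfl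
      | succ j hj ih =>
        have h1 := congrArg (fun ρ => ρ.f ⟨a, hmono hj ha⟩) (c'.compat j)
        exact h1.trans ih
    let μf : ↥(⋃ i, A i) → C'.A := fun a => (c'.ψ (idx a)).f ⟨a.1, hidx a⟩
    have hμf : ∀ (i : ℕ) (a : α) (ha : a ∈ A i),
        μf ⟨a, Set.mem_iUnion.mpr ⟨i, ha⟩⟩ = (c'.ψ i).f ⟨a, ha⟩ := by
      intro i a ha
      rcases le_total (idx ⟨a, Set.mem_iUnion.mpr ⟨i, ha⟩⟩) i with h | h
      · exact (hcons' a h (hidx ⟨a, Set.mem_iUnion.mpr ⟨i, ha⟩⟩)).symm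
      · exact hcons' a h ha
    let μg : C'.X → L := fun y =>
      ⟨fun i => (c'.ψ i).g y, fun i => congrArg (fun ρ => ρ.g y) (c'.compat i)⟩
    have μcomm : ∀ (a : ↥(⋃ i, A i)) (y : C'.X), C'.r (μf a) y = r' a (μg y) :=
      fun a y => (c'.ψ (idx a)).comm ⟨a.1, hidx a⟩ y
    have hμmono : Function.Injective μf := by
      intro a b h
      obtain ⟨i, hai⟩ := memU a
      obtain ⟨j, hbj⟩ := memU b
      have hak : a.1 ∈ A (max i j) := hmono (le_max_left i j) hai
      have hbk : b.1 ∈ A (max i j) := hmono (le_max_right i j) hbj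
      have h1 : μf a = (c'.ψ (max i j)).f ⟨a.1, hak⟩ := hμf (max i j) a.1 hak
      have h2 : μf b = (c'.ψ (max i j)).f ⟨b.1, hbk⟩ := hμf (max i j) b.1 hbk
      have h3 : (⟨a.1, hak⟩ : ↥(A (max i j))) = ⟨b.1, hbk⟩ :=
        hmor' (max i j) (by rw [← h1, ← h2]; exact h)
      have h5 := Subtype.ext_iff.mp h3
      exact Subtype.ext h5
    refine ⟨⟨μf, μg, μcomm⟩, ⟨hμmono, fun i => ?_⟩, ?_⟩
    · refine ChuHom.ext ?_ ?_
      · funext a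
        exact hμf i a.1 a.2
      · rfl
    · rintro μ' ⟨-, hfac'⟩
      refine ChuHom.ext ?_ ?_
      · funext a
        obtain ⟨i, hai⟩ := memU a
        have h1 := congrArg (fun ρ => ρ.f ⟨a.1, hai⟩) (hfac' i)
        exact h1.trans (hμf i a.1 hai).symm
      · funext y
        refine Subtype.ext (funext fun i => ?_)
        exact congrArg (fun ρ => ρ.g y) (hfac' i)
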